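/- Let M be a real symmetric matrix partitioned as M = [[A, B], [Bᵀ, C]] with A and C square. Then M is positive semidefinite if and only if A is positive semidefinite, Range(B) ⊆ Range(A), and the generalized Schur complement M/A = C - Bᵀ A⁺ B is positive semidefinite. -/

import Mathlib

open Matrix

/-- `P` is the Moore–Penrose pseudoinverse of `A` (the four Penrose conditions). -/
def IsMPInv {m n : ℕ} (A : Matrix (Fin m) (Fin n) ℝ) (P : Matrix (Fin n) (Fin m) ℝ) : Prop :=
  A * P * A = A ∧ P * A * P = P ∧ (A * P)ᵀ = A * P ∧ (P * A)ᵀ = P * A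

/-- PSD characterization via the generalized Schur complement. -/
lemma mp_unique {m n : ℕ} {A : Matrix (Fin m) (Fin n) ℝ} {P Q : Matrix (Fin n) (Fin m) ℝ}
    (hP : IsMPInv A P) (hQ : IsMPInv A Q) : P = Q := by
  obtain ⟨hP1, hP2, hP3, hP4⟩ := hP
  obtain ⟨hQ1, hQ2, hQ3, hQ4⟩ := hQ
  have h1 : P = P * A * Q := by
    calc P = P * A * P := hP2.symm
    _ = P * (A * P)ᵀ := by rw [hP3, Matrix.mul_assoc]
    _ = P * (A * Q * A * P)ᵀ := by rw [hQ1]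
    _ = P * ((A * Q) * (A * P))ᵀ := by rw [Matrix.mul_assoc (A * Q)]
    _ = P * ((A * P)ᵀ * (A * Q)ᵀ) := by rw [transpose_mul]
    _ = P * ((A * P) * (A * Q)) := by rw [hP3, hQ3]
    _ = (P * A * P) * (A * Q) := by simp only [Matrix.mul_assoc]
    _ = P * A * Q := by rw [hP2, Matrix.mul_assoc]
  have h2 : Q = P * A * Q := by
    calc Q = Q * A * Q := hQ2.symm
    _ = (Q * A)ᵀ * Q := by rw [hQ4]
    _ = (Q * (A * P * A))ᵀ * Q := by rw [hP1]
    _ = ((Q * A) * (P * A))ᵀ * Q := by simp only [Matrix.mul_assoc]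
    _ = ((P * A)ᵀ * (Q * A)ᵀ) * Q := by rw [transpose_mul]
    _ = ((P * A) * (Q * A)) * Q := by rw [hP4, hQ4]
    _ = P * A * (Q * A * Q) := by simp only [Matrix.mul_assoc]
    _ = P * A * Q := by rw [hQ2]
  rw [h1, ← h2]

lemma mp_transpose {m n : ℕ} {A : Matrix (Fin m) (Fin n) ℝ} {P : Matrix (Fin n) (Fin m) ℝ}
    (hP : IsMPInv A P) : IsMPInv Aᵀ Pᵀ := by
  obtain ⟨h1, h2, h3, h4⟩ := hP
  refine ⟨?_, ?_, ?_, ?_⟩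
  · rw [← transpose_mul, ← transpose_mul, ← Matrix.mul_assoc, h1]
  · rw [← transpose_mul, ← transpose_mul, ← Matrix.mul_assoc, h2]
  · rw [← transpose_mul, transpose_transpose, h4]
  · rw [← transpose_mul, transpose_transpose, h3]

lemma mulVec_ext {m n : ℕ} {M N : Matrix (Fin m) (Fin n) ℝ}
    (h : ∀ v, M *ᵥ v = N *ᵥ v) : M = N := by
  ext i j
  have := congrFun (h (Pi.single j 1)) i
  simpa using this

theorem posSemidef_iff_schur {p q : ℕ}
    (A : Matrix (Fin p) (Fin p) ℝ) (B : Matrix (Fin p) (Fin q) ℝ)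
    (C : Matrix (Fin q) (Fin q) ℝ)
    (hA : A.IsSymm) (hC : C.IsSymm)
    (Ap : Matrix (Fin p) (Fin p) ℝ) (hAp : IsMPInv A Ap) :
    (fromBlocks A B Bᵀ C).PosSemidef ↔
      A.PosSemidef ∧ LinearMap.range B.mulVecLin ≤ LinearMap.range A.mulVecLin ∧
        (C - Bᵀ * Ap * B).PosSemidef := by
  have hAt : Aᵀ = A := hA
  have hApt : Apᵀ = Ap := by
    have h := mp_transpose hAp
    rw [hAt] at h
    exact mp_unique h hAp
  -- symmetry helpers
  have hsymB : ∀ (x : Fin p → ℝ) (y : Fin q → ℝ), y ⬝ᵥ Bᵀ *ᵥ x = x ⬝ᵥ B *ᵥ y := by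
    intro x y
    rw [dotProduct_mulVec, vecMul_transpose, dotProduct_comm]
  have hsymA : ∀ (x s : Fin p → ℝ), s ⬝ᵥ A *ᵥ x = x ⬝ᵥ A *ᵥ s := by
    intro x s
    rw [dotProduct_mulVec, ← hAt, vecMul_transpose, dotProduct_comm, hAt]
  -- quadratic form expansion
  have hq : ∀ (x : Fin p → ℝ) (y : Fin q → ℝ),
      star (Sum.elim x y) ⬝ᵥ (fromBlocks A B Bᵀ C *ᵥ Sum.elim x y) =
        x ⬝ᵥ A *ᵥ x + x ⬝ᵥ B *ᵥ y + (y ⬝ᵥ Bᵀ *ᵥ x + y ⬝ᵥ C *ᵥ y) := by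
    intro x y
    simp [fromBlocks_mulVec, sumElim_dotProduct_sumElim, dotProduct_add]
  constructor
  · intro hM
    obtain ⟨hMh, hMq⟩ := posSemidef_iff_dotProduct_mulVec.mp hM
    have hApsd : A.PosSemidef := by
      rw [posSemidef_iff_dotProduct_mulVec]
      constructor
      · rwa [IsHermitian, conjTranspose_eq_transpose_of_trivial]
      · intro x
        have h := hMq (Sum.elim x 0)
        rw [hq] at h
        simpa using h
    have hker : ∀ x : Fin p → ℝ, A *ᵥ x = 0 → Bᵀ *ᵥ x = 0 := by
      intro x hx
      set y := Bᵀ *ᵥ x with hy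
      by_contra hne
      have hc0 : 0 ≤ y ⬝ᵥ y := by simpa using dotProduct_star_self_nonneg y
      have hc : 0 < y ⬝ᵥ y :=
        lt_of_le_of_ne hc0 (Ne.symm (fun h => hne (dotProduct_self_eq_zero.mp h)))
      set c := y ⬝ᵥ y with hcdef
      set d := y ⬝ᵥ C *ᵥ y with hddef
      set t := (d + 1) / (2 * c) with htdef
      have h := hMq (Sum.elim (t • x) (-y))
      rw [hq] at h
      have e1 : (t • x) ⬝ᵥ A *ᵥ (t • x) = 0 := by
        rw [mulVec_smul, hx]; simp
      have e2 : (t • x) ⬝ᵥ B *ᵥ (-y) = -(t * c) := by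
        rw [mulVec_neg, dotProduct_neg, smul_dotProduct, smul_eq_mul, ← hsymB, ← hy, ← hcdef]
      have e3 : (-y) ⬝ᵥ Bᵀ *ᵥ (t • x) = -(t * c) := by
        rw [mulVec_smul, dotProduct_smul, smul_eq_mul, neg_dotProduct, ← hy, ← hcdef]
        ring
      have e4 : (-y) ⬝ᵥ C *ᵥ (-y) = d := by
        rw [mulVec_neg, dotProduct_neg, neg_dotProduct, ← hddef]; ring
      rw [e1, e2, e3, e4] at h
      have htc : t * c = (d + 1) / 2 := by
        rw [htdef]
        field_simp
      rw [htc] at h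
      linarith
    have hBt : Bᵀ = Bᵀ * Ap * A := by
      apply mulVec_ext
      intro v
      have h0 : A *ᵥ (v - (Ap * A) *ᵥ v) = 0 := by
        rw [mulVec_sub, mulVec_mulVec, ← Matrix.mul_assoc, hAp.1, sub_self]
      have h1 := hker _ h0
      rw [mulVec_sub, sub_eq_zero, mulVec_mulVec, ← Matrix.mul_assoc] at h1
      exact h1
    have hAApB : A * Ap * B = B := by
      have h := congrArg transpose hBt
      rw [transpose_transpose, transpose_mul, transpose_mul, transpose_transpose, hAt, hApt] at h
      rw [← Matrix.mul_assoc] at h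
      exact h.symm
    refine ⟨hApsd, ?_, posSemidef_iff_dotProduct_mulVec.mpr ⟨?_, ?_⟩⟩
    · rintro u ⟨y, rfl⟩
      exact ⟨(Ap * B) *ᵥ y, by
        simp only [mulVecLin_apply, mulVec_mulVec, ← Matrix.mul_assoc, hAApB]⟩
    · show ((C - Bᵀ * Ap * B))ᴴ = _
      rw [conjTranspose_eq_transpose_of_trivial, transpose_sub, transpose_mul, transpose_mul,
        transpose_transpose, hApt, hC, Matrix.mul_assoc]
    · intro y
      set u := B *ᵥ y with hu
      set s := Ap *ᵥ u with hs
      have hAs : A *ᵥ s = u := by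
        rw [hs, hu, mulVec_mulVec, mulVec_mulVec, hAApB]
      have h := hMq (Sum.elim (-s) y)
      rw [hq] at h
      have e1 : (-s) ⬝ᵥ A *ᵥ (-s) = s ⬝ᵥ u := by
        rw [mulVec_neg, dotProduct_neg, neg_dotProduct, neg_neg, hAs]
      have e2 : (-s) ⬝ᵥ B *ᵥ y = -(s ⬝ᵥ u) := by rw [neg_dotProduct, hu]
      have e3 : y ⬝ᵥ Bᵀ *ᵥ (-s) = -(s ⬝ᵥ u) := by
        rw [hsymB, neg_dotProduct, ← hu]
      rw [e1, e2, e3] at h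
      rw [star_trivial]
      have egoal : y ⬝ᵥ (C - Bᵀ * Ap * B) *ᵥ y = y ⬝ᵥ C *ᵥ y - s ⬝ᵥ u := by
        rw [sub_mulVec, dotProduct_sub]
        congr 1
        rw [Matrix.mul_assoc, ← mulVec_mulVec, ← mulVec_mulVec, ← hu, ← hs, hsymB, ← hu]
      rw [egoal]
      linarith
  · rintro ⟨hApsd, hr, hS⟩
    have hAApB : A * Ap * B = B := by
      apply mulVec_ext
      intro v
      obtain ⟨z, hz⟩ := hr (LinearMap.mem_range_self _ v)
      simp only [mulVecLin_apply] at hz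
      rw [← mulVec_mulVec, ← hz, mulVec_mulVec, hAp.1, hz]
    rw [posSemidef_iff_dotProduct_mulVec]
    constructor
    · show (fromBlocks A B Bᵀ C)ᴴ = _
      rw [conjTranspose_eq_transpose_of_trivial, fromBlocks_transpose, hAt, hC,
        transpose_transpose]
    · intro v
      have hv : Sum.elim (v ∘ Sum.inl) (v ∘ Sum.inr) = v := Sum.elim_comp_inl_inr v
      set x := v ∘ Sum.inl with hx
      set y := v ∘ Sum.inr with hy
      rw [← hv, hq]
      set u := B *ᵥ y with hu
      set s := Ap *ᵥ u with hs
      have hAs : A *ᵥ s = u := by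
        rw [hs, hu, mulVec_mulVec, mulVec_mulVec, hAApB]
      have h1 := hApsd.dotProduct_mulVec_nonneg (x + s)
      rw [star_trivial] at h1
      have hexp : (x + s) ⬝ᵥ A *ᵥ (x + s) = x ⬝ᵥ A *ᵥ x + 2 * (x ⬝ᵥ u) + s ⬝ᵥ u := by
        rw [mulVec_add, dotProduct_add, add_dotProduct, add_dotProduct, hsymA x s, hAs]
        ring
      have h2 := hS.dotProduct_mulVec_nonneg y
      rw [star_trivial] at h2
      have hSy : y ⬝ᵥ (C - Bᵀ * Ap * B) *ᵥ y = y ⬝ᵥ C *ᵥ y - s ⬝ᵥ u := by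
        rw [sub_mulVec, dotProduct_sub]
        congr 1
        rw [Matrix.mul_assoc, ← mulVec_mulVec, ← mulVec_mulVec, ← hu, ← hs, hsymB, ← hu]
      rw [hSy] at h2
      rw [hsymB x y, ← hu]
      linarith
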